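/- For every n ≥ 1, the block length satisfies L_{n+1} = 3·L_n − 2·c_n, where L_n = |B_n| and c_n is the number of occurrences of the symbol 1 in B_n; equivalently, the sum of the entries of B_n equals L_{n+1}. -/

import Mathlib

/-- Generation operator: expand a run-length vector `R` starting with symbol `s`,
alternating between `s` and `4 - s` from run to run. -/
def G : List ℕ → ℕ → List ℕ
  | [], _ => []
  | r :: rs, s => List.replicate r s ++ G rs (4 - s)

/-- Pillar sequences: `P 1 = [3]`, `P (n+1) = G (P n) 3` for `n ≥ 1`. -/
def P : ℕ → List ℕ
  | 0 => []
  | 1 => [3]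
  | n + 2 => G (P (n + 1)) 3

/-- Block sequences: `B 1 = G [1,3,3,3,1] 1`, `B (n+1) = B n ++ P n ++ B n` for `n ≥ 1`. -/
def B : ℕ → List ℕ
  | 0 => []
  | 1 => G [1, 3, 3, 3, 1] 1
  | n + 2 => B (n + 1) ++ P (n + 1) ++ B (n + 1)

lemma G_length : ∀ (R : List ℕ) (s : ℕ), (G R s).length = R.sum
  | [], _ => rfl
  | r :: rs, s => by
    simp [G, G_length rs (4 - s)]

lemma G_mem : ∀ (R : List ℕ) (s : ℕ), (s = 1 ∨ s = 3) → ∀ x ∈ G R s, x = 1 ∨ x = 3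
  | [], _, _, x, hx => by simp [G] at hx
  | r :: rs, s, hs, x, hx => by
    simp only [G, List.mem_append, List.mem_replicate] at hx
    rcases hx with ⟨_, rfl⟩ | hx
    · exact hs
    · exact G_mem rs (4 - s) (by omega) x hx

lemma P_mem : ∀ n, ∀ x ∈ P n, x = 1 ∨ x = 3
  | 0, x, hx => by simp [P] at hx
  | 1, x, hx => by simp [P] at hx; omega
  | n + 2, x, hx => G_mem (P (n + 1)) 3 (Or.inr rfl) x hx

lemma B_mem : ∀ n, ∀ x ∈ B n, x = 1 ∨ x = 3
  | 0, x, hx => by simp [B] at hx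
  | 1, x, hx => G_mem [1, 3, 3, 3, 1] 1 (Or.inl rfl) x hx
  | n + 2, x, hx => by
    simp only [B, List.mem_append] at hx
    rcases hx with (hx | hx) | hx
    · exact B_mem (n + 1) x hx
    · exact P_mem (n + 1) x hx
    · exact B_mem (n + 1) x hx

lemma sum_count (l : List ℕ) (h : ∀ x ∈ l, x = 1 ∨ x = 3) :
    l.sum + 2 * l.count 1 = 3 * l.length := by
  induction l with
  | nil => rfl
  | cons a t ih =>
    have ht := ih (fun x hx => h x (List.mem_cons_of_mem a hx))
    rcases h a List.mem_cons_self with rfl | rfl <;>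
      simp [List.count_cons] <;> omega

lemma invariant : ∀ n, 1 ≤ n → (B n).sum = 2 * (B n).length + (P n).length := by
  intro n hn
  induction n, hn using Nat.le_induction with
  | base => rfl
  | succ n hn ih =>
    obtain ⟨m, rfl⟩ : ∃ m, n = m + 1 := ⟨n - 1, by omega⟩
    have hB : B (m + 2) = B (m + 1) ++ P (m + 1) ++ B (m + 1) := rfl
    have hP : P (m + 2) = G (P (m + 1)) 3 := rfl
    rw [hB, hP, G_length]
    simp only [List.sum_append, List.length_append]
    omega

/-- For every `n ≥ 1`, `L (n+1) = 3·L n − 2·c n` where `L n = |B n|` and `c n` counts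
the `1`s in `B n`; equivalently, the sum of the entries of `B n` equals `L (n+1)`. -/
theorem block_length_recurrence :
    ∀ n : ℕ, 1 ≤ n →
      ((B (n + 1)).length : ℤ) = 3 * ((B n).length : ℤ) - 2 * ((B n).count 1 : ℤ) ∧
      (B n).sum = (B (n + 1)).length := by
  intro n hn
  obtain ⟨m, rfl⟩ : ∃ m, n = m + 1 := ⟨n - 1, by omega⟩
  have hB : B (m + 2) = B (m + 1) ++ P (m + 1) ++ B (m + 1) := rfl
  have hinv := invariant (m + 1) (by omega)
  have hlen : (B (m + 2)).length = 2 * (B (m + 1)).length + (P (m + 1)).length := by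
    rw [hB]; simp [List.length_append]; omega
  have hsum : (B (m + 1)).sum = (B (m + 2)).length := by omega
  have hcount := sum_count (B (m + 1)) (B_mem (m + 1))
  constructor
  · have := congrArg (Nat.cast : ℕ → ℤ) hcount
    have h2 := congrArg (Nat.cast : ℕ → ℤ) hsum
    push_cast at this h2
    linarith
  · exact hsum
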